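/- (Theorem 6.) Let q be real with 0 < q < 1, α ≥ 1 an integer, d an odd positive integer, χ a Dirichlet character modulo d, F an odd positive integer divisible by d, 0 ≤ a < F an integer, x > 0 real, and s ∈ ℂ. Assume the convergence condition q^{α(x+a)} · [F:q^α] < (1 − q^{αF}) · [x+a:q^α]. Then H_q^χ(s : x : a : F | α) = ( [2:q] q^a (−1)^a χ(a) / ( [2:q^F] · [x+a:q^α]^s ) ) · Σ_{k=0}^∞ q^{α k (x+a)} C(−s,k) ( [F:q^α] / [x+a:q^α] )^k · Ẽ_{k,q^F}(α), where C(−s,k) = ( Π_{i=0}^{k−1} (−s − i) ) / k! is the generalized binomial coefficient. -/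

import Mathlib

open scoped BigOperators

/-- `[x:q] = (q^x - 1)/(q - 1)` with real exponentiation. -/
noncomputable def qNum (q x : ℝ) : ℝ := (q ^ x - 1) / (q - 1)

/-- Weighted `q`-Euler polynomial `Ẽ_{n,q}(x|α) = [2:q] ∑_{m≥0} (-1)^m q^m [m+x:q^α]^n`;
at `x = 0` these are the weighted `q`-Euler numbers. -/
noncomputable def qEuler (q : ℝ) (α n : ℕ) (x : ℝ) : ℝ :=
  qNum q 2 * ∑' m : ℕ, (-1 : ℝ) ^ m * q ^ m * (qNum (q ^ α) ((m : ℝ) + x)) ^ n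

/-- Partial Dirichlet-type zeta function
`H_q^χ(s : x : a : F | α) = [2:q] ∑_{m ≡ a (mod F)} q^m χ(m) (-1)^m [x+m:q^α]^{-s}`,
the sum over `m ≥ 0` with `m ≡ a (mod F)` being parametrized by `m = a + F j`, `j ≥ 0`. -/
noncomputable def qPartialZeta (q : ℝ) (d : ℕ) (χ : DirichletCharacter ℂ d) (α : ℕ)
    (s : ℂ) (x : ℝ) (a F : ℕ) : ℂ :=
  (qNum q 2 : ℂ) *
    ∑' j : ℕ, (q : ℂ) ^ (a + F * j) * χ ((a + F * j : ℕ) : ZMod d) * (-1 : ℂ) ^ (a + F * j) *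
      ((qNum (q ^ α) (x + ((a + F * j : ℕ) : ℝ)) : ℝ) : ℂ) ^ (-s)

/-- Generalized binomial coefficient `C(z,k) = z(z-1)⋯(z-k+1)/k!`. -/
noncomputable def genBinom (z : ℂ) (k : ℕ) : ℂ :=
  (∏ i ∈ Finset.range k, (z - (i : ℂ))) / (k.factorial : ℂ)


section Binomial

lemma slit_of_ball {w : ℂ} (hw : w ∈ Metric.ball (0:ℂ) 1) : (1 + w) ∈ Complex.slitPlane := by
  rw [Metric.mem_ball, dist_zero_right] at hw
  refine Or.inl ?_
  have h1 : |w.re| ≤ ‖w‖ := Complex.abs_re_le_norm w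
  simp only [Complex.add_re, Complex.one_re]
  have := abs_le.mp h1
  linarith

lemma iterDeriv_cpow (z : ℂ) (n : ℕ) :
    Set.EqOn (iteratedDeriv n (fun w : ℂ => (1 + w) ^ z))
      (fun w => (∏ i ∈ Finset.range n, (z - (i : ℂ))) * (1 + w) ^ (z - n))
      (Metric.ball (0:ℂ) 1) := by
  induction n with
  | zero => intro w hw; simp
  | succ n ih =>
    intro w hw
    rw [iteratedDeriv_succ]
    have hEq : iteratedDeriv n (fun w : ℂ => (1 + w) ^ z) =ᶠ[nhds w]
        (fun w => (∏ i ∈ Finset.range n, (z - (i : ℂ))) * (1 + w) ^ (z - n)) :=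
      Filter.eventuallyEq_of_mem (Metric.isOpen_ball.mem_nhds hw) ih
    rw [hEq.deriv_eq]
    have h1 : HasDerivAt (fun w : ℂ => 1 + w) 1 w := by
      simpa using (hasDerivAt_id w).const_add (1:ℂ)
    have h2 := (h1.cpow_const (c := z - n) (slit_of_ball hw)).const_mul
      (∏ i ∈ Finset.range n, (z - (i : ℂ)))
    rw [h2.deriv]
    rw [Finset.prod_range_succ]
    push_cast
    rw [show z - ((n:ℂ)+1) = z - n - 1 by ring]
    ring

lemma hasSum_genBinom (z : ℂ) (t : ℂ) (ht : ‖t‖ < 1) :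
    HasSum (fun k => genBinom z k * t ^ k) ((1 + t) ^ z) := by
  obtain ⟨r, hr1, hr2⟩ := exists_between ht
  have hr0 : 0 < r := lt_of_le_of_lt (norm_nonneg t) hr1
  have hd : DifferentiableOn ℂ (fun w : ℂ => (1 + w) ^ z)
      (Metric.closedBall 0 r.toNNReal) := by
    intro w hw
    have hw' : w ∈ Metric.ball (0:ℂ) 1 := by
      rw [Metric.mem_closedBall] at hw
      rw [Metric.mem_ball]
      calc dist w 0 ≤ (r.toNNReal : ℝ) := hw
        _ = r := Real.coe_toNNReal _ hr0.le
        _ < 1 := hr2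
    exact (((differentiableAt_id.const_add (1:ℂ)).differentiableWithinAt).cpow
      (differentiableWithinAt_const z) (slit_of_ball hw'))
  have h := hd.hasFPowerSeriesOnBall (Real.toNNReal_pos.mpr hr0)
  have hball : t ∈ Metric.eball (0:ℂ) r.toNNReal := by
    rw [Metric.mem_eball, edist_zero_right]
    have : ‖t‖₊ < r.toNNReal := by
      rw [← NNReal.coe_lt_coe, coe_nnnorm, Real.coe_toNNReal _ hr0.le]; exact hr1
    exact_mod_cast this
  have hs := h.hasSum_iteratedFDeriv hball
  rw [zero_add] at hs
  refine hs.congr_fun fun n => ?_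
  rw [iteratedFDeriv_apply_eq_iteratedDeriv_mul_prod]
  rw [iterDeriv_cpow z n (Metric.mem_ball_self one_pos)]
  simp [genBinom, Complex.one_cpow, smul_eq_mul, Finset.prod_const, div_eq_mul_inv]
  ring

end Binomial

section Summability

open Filter Topology

lemma summable_D (c r : ℝ) (hc : 1 ≤ c) (hr0 : 0 ≤ r) (hr1 : r < 1) :
    Summable (fun k : ℕ => (∏ i ∈ Finset.range k, (c + i)) / (k.factorial : ℝ) * r ^ k) := by
  set D : ℕ → ℝ := fun k => (∏ i ∈ Finset.range k, (c + i)) / (k.factorial : ℝ) * r ^ k with hD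
  have hDpos : ∀ k, 0 ≤ D k := by
    intro k
    apply mul_nonneg (div_nonneg (Finset.prod_nonneg fun i _ => by positivity) (by positivity))
      (pow_nonneg hr0 k)
  have hT : Tendsto (fun n : ℕ => (c + n) / ((n : ℝ) + 1) * r) atTop (𝓝 r) := by
    have h0 : Tendsto (fun n : ℕ => (c - 1) * (1 / ((n : ℝ) + 1))) atTop (𝓝 ((c-1) * 0)) :=
      tendsto_one_div_add_atTop_nhds_zero_nat.const_mul _
    have h1 : Tendsto (fun n : ℕ => (1 + (c - 1) * (1 / ((n : ℝ) + 1))) * r) atTop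
        (𝓝 ((1 + (c-1) * 0) * r)) := (h0.const_add 1).mul_const r
    simp only [mul_zero, add_zero, one_mul] at h1
    refine h1.congr fun n => ?_
    have hn : ((n : ℝ) + 1) ≠ 0 := by positivity
    have : 1 + (c - 1) * (1 / ((n:ℝ) + 1)) = (c + n) / ((n:ℝ) + 1) := by
      field_simp; ring
    rw [this]
  have hl : r < (1 + r) / 2 := by linarith
  have hev : ∀ᶠ n : ℕ in atTop, (c + n) / ((n : ℝ) + 1) * r < (1 + r) / 2 :=
    hT.eventually (eventually_lt_nhds hl)
  refine summable_of_ratio_norm_eventually_le (show (1+r)/2 < 1 by linarith) ?_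
  filter_upwards [hev] with n hn
  have hDsucc : D (n + 1) = D n * ((c + n) / ((n : ℝ) + 1) * r) := by
    rw [hD]
    simp only [Finset.prod_range_succ, Nat.factorial_succ, pow_succ]
    push_cast
    have h1 : (n.factorial : ℝ) ≠ 0 := by positivity
    have h2 : ((n : ℝ) + 1) ≠ 0 := by positivity
    field_simp
  rw [Real.norm_of_nonneg (hDpos _), Real.norm_of_nonneg (hDpos _), hDsucc, mul_comm ((1+r)/2)]
  exact mul_le_mul_of_nonneg_left hn.le (hDpos n)

lemma norm_genBinom_le (z : ℂ) (k : ℕ) :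
    ‖genBinom z k‖ ≤ (∏ i ∈ Finset.range k, (‖z‖ + 1 + i)) / (k.factorial : ℝ) := by
  rw [genBinom, norm_div]
  have h1 : ‖((k.factorial : ℕ) : ℂ)‖ = (k.factorial : ℝ) := by
    rw [Complex.norm_natCast]
  rw [h1]
  apply div_le_div_of_nonneg_right ?h ?hp |>.trans_eq rfl
  case hp => positivity
  case h =>
    calc ‖∏ i ∈ Finset.range k, (z - (i : ℂ))‖ = ∏ i ∈ Finset.range k, ‖z - (i : ℂ)‖ :=
          norm_prod _ _
      _ ≤ ∏ i ∈ Finset.range k, (‖z‖ + 1 + i) := by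
          apply Finset.prod_le_prod (fun i _ => norm_nonneg _) fun i _ => ?_
          calc ‖z - (i : ℂ)‖ ≤ ‖z‖ + ‖(i : ℂ)‖ := norm_sub_le _ _
            _ ≤ ‖z‖ + 1 + i := by rw [Complex.norm_natCast]; linarith

lemma summable_genBinom_mul (z : ℂ) (r : ℝ) (hr0 : 0 ≤ r) (hr1 : r < 1) :
    Summable (fun k : ℕ => ‖genBinom z k‖ * r ^ k) := by
  refine (summable_D (‖z‖ + 1) r (by linarith [norm_nonneg z]) hr0 hr1).of_nonneg_of_le
    (fun k => by positivity) (fun k => ?_)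
  apply mul_le_mul_of_nonneg_right (norm_genBinom_le z k) (pow_nonneg hr0 k)

end Summability

section qNumLemmas
variable {r : ℝ} (hr0 : 0 < r) (hr1 : r < 1)
include hr0 hr1

lemma qNum_eq (y : ℝ) : qNum r y = (1 - r ^ y) / (1 - r) := by
  rw [qNum, ← neg_div_neg_eq]; ring_nf

lemma qNum_nonneg {y : ℝ} (hy : 0 ≤ y) : 0 ≤ qNum r y := by
  rw [qNum_eq hr0 hr1]
  apply div_nonneg _ (by linarith)
  have := Real.rpow_le_one hr0.le hr1.le hy
  linarith

lemma qNum_pos {y : ℝ} (hy : 0 < y) : 0 < qNum r y := by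
  rw [qNum_eq hr0 hr1]
  apply div_pos _ (by linarith)
  have := Real.rpow_lt_one hr0.le hr1 hy
  linarith

lemma qNum_le (y : ℝ) : qNum r y ≤ 1 / (1 - r) := by
  rw [qNum_eq hr0 hr1]
  apply div_le_div_of_nonneg_right ?_ (by linarith) |>.trans_eq rfl
  have := Real.rpow_pos_of_pos hr0 y
  linarith

lemma qNum_two : qNum r 2 = 1 + r := by
  rw [qNum]
  have h2 : r ^ (2:ℝ) = r ^ (2:ℕ) := by
    rw [← Real.rpow_natCast r 2]; norm_num
  rw [h2]
  have : r - 1 ≠ 0 := by intro h; linarith [sub_eq_zero.mp h]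
  field_simp
  ring

lemma qNum_natCast (m : ℕ) : qNum r (m : ℝ) = (r ^ m - 1) / (r - 1) := by
  rw [qNum, Real.rpow_natCast]

lemma qNum_add (y c : ℝ) : qNum r (y + c) = qNum r y + r ^ y * qNum r c := by
  have hne : r - 1 ≠ 0 := by intro h; linarith [sub_eq_zero.mp h]
  rw [qNum, qNum, qNum, Real.rpow_add hr0]
  field_simp
  ring

lemma qNum_nat_mul (Fn j : ℕ) (hF : 0 < Fn) : qNum r ((Fn * j : ℕ) : ℝ) =
    qNum r (Fn : ℝ) * qNum (r ^ Fn) ((j : ℕ) : ℝ) := by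
  have hne : r - 1 ≠ 0 := by intro h; linarith [sub_eq_zero.mp h]
  have hQ1 : r ^ Fn < 1 := pow_lt_one₀ hr0.le hr1 hF.ne'
  have hQ0 : 0 < r ^ Fn := pow_pos hr0 Fn
  have hQne : r ^ Fn - 1 ≠ 0 := by intro h; linarith [sub_eq_zero.mp h]
  rw [qNum_natCast hr0 hr1, qNum_natCast hr0 hr1, qNum_natCast hQ0 hQ1, pow_mul]
  field_simp

end qNumLemmas

set_option linter.unusedSectionVars false in
set_option maxHeartbeats 1000000 in
theorem statement12 (q : ℝ) (hq0 : 0 < q) (hq1 : q < 1) (α : ℕ) (hα : 1 ≤ α)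
    (d : ℕ) (hd0 : 0 < d) (hdo : Odd d) (χ : DirichletCharacter ℂ d)
    (F : ℕ) (hF0 : 0 < F) (hFo : Odd F) (hdF : d ∣ F)
    (a : ℕ) (ha : a < F) (x : ℝ) (hx : 0 < x) (s : ℂ)
    (hconv : q ^ ((α : ℝ) * (x + a)) * qNum (q ^ α) F <
      (1 - q ^ (α * F)) * qNum (q ^ α) (x + a)) :
    qPartialZeta q d χ α s x a F =
      ((qNum q 2 : ℝ) : ℂ) * (q : ℂ) ^ a * (-1 : ℂ) ^ a * χ (a : ZMod d) /
          (((qNum (q ^ F) 2 : ℝ) : ℂ) * ((qNum (q ^ α) (x + a) : ℝ) : ℂ) ^ s) *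
        ∑' k : ℕ,
          ((q ^ ((↑(α * k) : ℝ) * (x + a)) : ℝ) : ℂ) * genBinom (-s) k *
            ((qNum (q ^ α) F / qNum (q ^ α) (x + a) : ℝ) : ℂ) ^ k *
              ((qEuler (q ^ F) α k 0 : ℝ) : ℂ) := by
  rw [qPartialZeta]
  set A : ℝ := q ^ α with hAdef
  have hA0 : 0 < A := pow_pos hq0 α
  have hA1 : A < 1 := pow_lt_one₀ hq0.le hq1 (by omega)
  set Q : ℝ := q ^ (α * F) with hQdef
  have hQA : Q = A ^ F := by rw [hQdef, hAdef, ← pow_mul]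
  have hQ0 : 0 < Q := pow_pos hq0 _
  have hQ1 : Q < 1 := pow_lt_one₀ hq0.le hq1 (by positivity)
  set qF : ℝ := q ^ F with hqFdef
  have hqF0 : 0 < qF := pow_pos hq0 F
  have hqF1 : qF < 1 := pow_lt_one₀ hq0.le hq1 hF0.ne'
  have hQqF : Q = qF ^ α := by rw [hQdef, hqFdef, ← pow_mul, Nat.mul_comm]
  have hxa : (0:ℝ) < x + a := by positivity
  set X : ℝ := qNum A (x + a) with hXdef
  have hX : 0 < X := qNum_pos hA0 hA1 hxa
  set G : ℝ := qNum A (F:ℝ) with hGdef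
  have hG : 0 < G := qNum_pos hA0 hA1 (by exact_mod_cast hF0)
  set E : ℝ := A ^ (x + (a:ℝ)) with hEdef
  have hE : 0 < E := Real.rpow_pos_of_pos hA0 _
  have hEq : E = q ^ ((α:ℝ) * (x + a)) := by
    rw [hEdef, hAdef, ← Real.rpow_natCast q α, ← Real.rpow_mul hq0.le]
  have hconv' : E * G < (1 - Q) * X := by rw [hEq]; exact hconv
  have h1Q : 0 < 1 - Q := by linarith
  set u : ℕ → ℝ := fun j => qNum Q (j:ℝ) with hudef
  have hu0 : ∀ j, 0 ≤ u j := fun j => qNum_nonneg hQ0 hQ1 (Nat.cast_nonneg j)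
  have huB : ∀ j, u j ≤ 1/(1-Q) := fun j => qNum_le hQ0 hQ1 _
  set ρ : ℝ := E * G / ((1 - Q) * X) with hρdef
  have hρ0 : 0 ≤ ρ := by positivity
  have hρ1 : ρ < 1 := (div_lt_one (by positivity)).mpr hconv'
  set t : ℕ → ℝ := fun j => E * G / X * u j with htdef
  have ht0 : ∀ j, 0 ≤ t j := fun j => mul_nonneg (by positivity) (hu0 j)
  have htρ : ∀ j, t j ≤ ρ := by
    intro j
    calc t j ≤ E * G / X * (1/(1-Q)) :=
          mul_le_mul_of_nonneg_left (huB j) (by positivity)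
      _ = ρ := by rw [hρdef, div_mul_div_comm, mul_one, mul_comm X (1-Q)]
  have ht1 : ∀ j, t j < 1 := fun j => lt_of_le_of_lt (htρ j) hρ1
  -- key identity
  have hKey : ∀ j : ℕ, qNum A (x + ((a + F * j : ℕ) : ℝ)) = X * (1 + t j) := by
    intro j
    have h1 : x + ((a + F*j : ℕ):ℝ) = (x + a) + ((F*j : ℕ):ℝ) := by push_cast; ring
    rw [h1, qNum_add hA0 hA1, qNum_nat_mul hA0 hA1 F j hF0, ← hQA]
    show X + E * (G * u j) = X * (1 + t j)
    have hXne : X ≠ 0 := hX.ne'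
    have hc : X * (E * G / X) = E * G := by rw [mul_comm, div_mul_cancel₀ _ hXne]
    show X + E * (G * u j) = X * (1 + E * G / X * u j)
    rw [mul_add, mul_one, ← mul_assoc X, hc]
    ring
  -- binomial expansion
  have hBin : ∀ j : ℕ, HasSum (fun k => genBinom (-s) k * ((t j : ℝ):ℂ)^k)
      (((1 + t j : ℝ):ℂ) ^ (-s)) := by
    intro j
    have hn : ‖((t j : ℝ):ℂ)‖ < 1 := by
      rw [Complex.norm_real, Real.norm_eq_abs, abs_of_nonneg (ht0 j)]; exact ht1 j
    have h := hasSum_genBinom (-s) ((t j : ℝ):ℂ) hn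
    have h' : ((1 + t j : ℝ):ℂ) = 1 + ((t j:ℝ):ℂ) := by push_cast; ring
    rw [h']; exact h
  -- inner j-summability
  have hSsum : ∀ k, Summable (fun j : ℕ => (-1:ℝ)^j * qF^j * (u j)^k) := by
    intro k
    apply Summable.of_norm_bounded (g := fun j => (1/(1-Q))^k * qF^j)
      ((summable_geometric_of_lt_one hqF0.le hqF1).mul_left _)
    intro j
    have hno : ‖(-1:ℝ)^j * qF^j * (u j)^k‖ = qF^j * (u j)^k := by
      simp only [Real.norm_eq_abs, abs_mul, abs_pow, abs_neg, abs_one, one_pow, one_mul,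
        abs_of_nonneg hq0.le, abs_of_nonneg hqF0.le, abs_of_nonneg (hu0 j)]
    rw [hno, mul_comm]
    apply mul_le_mul_of_nonneg_right (pow_le_pow_left₀ (hu0 j) (huB j) k) (by positivity)
  -- qEuler link
  have hqE : ∀ k, qEuler qF α k 0 =
      qNum qF 2 * ∑' j : ℕ, (-1:ℝ)^j * qF^j * (u j)^k := by
    intro k
    rw [qEuler]
    congr 1
    apply tsum_congr; intro j
    rw [← hQqF, add_zero]
  -- character periodicity
  have hχ : ∀ j : ℕ, χ ((a + F * j : ℕ) : ZMod d) = χ ((a:ℕ) : ZMod d) := by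
    intro j
    congr 1
    push_cast
    rw [(ZMod.natCast_eq_zero_iff F d).mpr hdF]
    ring
  -- term rewrite
  have hTerm : ∀ j : ℕ, (q:ℂ)^(a + F*j) * χ ((a + F * j : ℕ) : ZMod d) * (-1:ℂ)^(a+F*j) *
      ((qNum A (x + ((a + F*j : ℕ):ℝ)) : ℝ):ℂ)^(-s)
      = ((q:ℂ)^a * (-1:ℂ)^a * χ ((a:ℕ) : ZMod d) * ((X:ℝ):ℂ)^(-s)) *
        ((-(qF:ℂ))^j * ((1 + t j : ℝ):ℂ)^(-s)) := by
    intro j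
    rw [hχ j, hKey j]
    rw [Complex.ofReal_mul, Complex.mul_cpow_ofReal_nonneg hX.le (by linarith [ht0 j]) (-s)]
    rw [pow_add, pow_mul, pow_add, pow_mul]
    have hneg : ((-1:ℂ)^F) = -1 := hFo.neg_one_pow
    have hqFC : ((qF:ℝ):ℂ) = (q:ℂ)^F := by rw [hqFdef]; push_cast; ring
    rw [hneg, hqFC, neg_pow ((q:ℂ)^F) j]
    ring
  rw [tsum_congr hTerm, tsum_mul_left]
  -- expand each j-term as a k-sum
  set g : ℕ → ℕ → ℂ := fun k j => (-(qF:ℂ))^j * (genBinom (-s) k * ((t j : ℝ):ℂ)^k)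
    with hgdef
  have hg : ∀ j : ℕ, (-(qF:ℂ))^j * ((1 + t j : ℝ):ℂ)^(-s) = ∑' k, g k j := by
    intro j
    rw [((hBin j).mul_left ((-(qF:ℂ))^j)).tsum_eq]
  have hnormg : ∀ p : ℕ × ℕ, ‖Function.uncurry g p‖ ≤
      (‖genBinom (-s) p.1‖ * ρ^p.1) * qF^p.2 := by
    rintro ⟨k, j⟩
    show ‖(-(qF:ℂ))^j * (genBinom (-s) k * ((t j : ℝ):ℂ)^k)‖ ≤ _
    rw [norm_mul, norm_mul, norm_pow, norm_neg, norm_pow, Complex.norm_real,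
      Complex.norm_real, Real.norm_of_nonneg hqF0.le, Real.norm_of_nonneg (ht0 j)]
    rw [mul_comm]
    apply mul_le_mul_of_nonneg_right ?_ (by positivity)
    exact mul_le_mul_of_nonneg_left (pow_le_pow_left₀ (ht0 j) (htρ j) k) (norm_nonneg _)
  have hgsum : Summable (Function.uncurry g) := by
    apply Summable.of_norm_bounded ?_ hnormg
    exact (summable_genBinom_mul (-s) ρ hρ0 hρ1).mul_of_nonneg
      (summable_geometric_of_lt_one hqF0.le hqF1)
      (fun k => by positivity) (fun j => by positivity)
  rw [tsum_congr hg, Summable.tsum_comm hgsum]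
  -- inner sum over j
  have hinner : ∀ k : ℕ, ∑' j, g k j =
      genBinom (-s) k * ((E * G / X : ℝ):ℂ)^k *
        (((∑' j : ℕ, (-1:ℝ)^j * qF^j * (u j)^k) : ℝ):ℂ) := by
    intro k
    have hptw : ∀ j : ℕ, g k j = (genBinom (-s) k * ((E * G / X : ℝ):ℂ)^k) *
        (((-1:ℝ)^j * qF^j * (u j)^k : ℝ):ℂ) := by
      intro j
      rw [hgdef]
      show (-(qF:ℂ))^j * (genBinom (-s) k * ((t j : ℝ):ℂ)^k) = _
      rw [htdef]
      push_cast
      ring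
    rw [tsum_congr hptw, tsum_mul_left, ← Complex.ofReal_tsum]
  rw [tsum_congr hinner]
  -- now handle RHS
  have hterm2 : ∀ k : ℕ, ((q ^ ((↑(α * k) : ℝ) * (x + a)) : ℝ) : ℂ) * genBinom (-s) k *
      ((G / X : ℝ) : ℂ) ^ k * ((qEuler qF α k 0 : ℝ) : ℂ)
      = ((qNum qF 2 : ℝ):ℂ) *
        (genBinom (-s) k * ((E * G / X : ℝ):ℂ)^k *
          (((∑' j : ℕ, (-1:ℝ)^j * qF^j * (u j)^k) : ℝ):ℂ)) := by
    intro k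
    rw [hqE k]
    have hEk : (q ^ ((↑(α * k) : ℝ) * (x + a)) : ℝ) = E ^ k := by
      rw [hEq, ← Real.rpow_natCast (q ^ ((α:ℝ)*(x+a))) k, ← Real.rpow_mul hq0.le]
      congr 1
      push_cast
      ring
    rw [hEk]
    push_cast
    rw [show ((E:ℂ) * (G:ℂ) / (X:ℂ))^k = (E:ℂ)^k * ((G:ℂ)/(X:ℂ))^k by
      rw [mul_div_assoc, mul_pow]]
    ring
  rw [tsum_congr hterm2, tsum_mul_left]
  -- final algebra
  have hb : ((qNum qF 2 : ℝ):ℂ) ≠ 0 := by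
    rw [qNum_two hqF0 hqF1]
    exact_mod_cast (show (1 + qF : ℝ) ≠ 0 by positivity)
  have hXs : ((X:ℝ):ℂ)^s ≠ 0 := by
    intro h
    rcases (Complex.cpow_eq_zero_iff _ _).mp h with ⟨h1, -⟩
    exact (Complex.ofReal_ne_zero.mpr hX.ne') h1
  rw [Complex.cpow_neg]
  field_simp
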